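/- For integers n₁, n₂ ≥ 1, 0 ≤ w₁ ≤ n₁, 0 ≤ w₂ ≤ n₂ and d ≥ 1, A(n₁+n₂, d, w₁+w₂) · C(n₁,w₁) · C(n₂,w₂) ≤ C(n₁+n₂, w₁+w₂) · T(w₁,n₁,w₂,n₂,d), where C(a,b) denotes the binomial coefficient. -/

import Mathlib

/-- The weight of a binary word: the number of its nonzero entries. -/
def wt {n : ℕ} (x : Fin n → Bool) : ℕ :=
  (Finset.univ.filter (fun i => x i = true)).card

/-- `Acw n d w` is the maximum size of a binary code of length `n`, constant weight `w`,
and minimum Hamming distance at least `d`. -/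
noncomputable def Acw (n d w : ℕ) : ℕ :=
  sSup {m | ∃ C : Finset (Fin n → Bool), C.card = m ∧ (∀ c ∈ C, wt c = w) ∧
    ∀ c ∈ C, ∀ c' ∈ C, c ≠ c' → d ≤ hammingDist c c'}

/-- `T w₁ n₁ w₂ n₂ d` is the maximum size of a doubly constant weight binary code of
length `n₁+n₂` and minimum distance at least `d`, in which every codeword has exactly
`w₁` ones among its first `n₁` coordinates and exactly `w₂` ones among its last `n₂`
coordinates. -/
noncomputable def T (w₁ n₁ w₂ n₂ d : ℕ) : ℕ :=
  sSup {m | ∃ C : Finset (Fin (n₁ + n₂) → Bool), C.card = m ∧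
    (∀ c ∈ C, (Finset.univ.filter (fun i : Fin (n₁ + n₂) => i.val < n₁ ∧ c i = true)).card = w₁ ∧
      (Finset.univ.filter (fun i : Fin (n₁ + n₂) => n₁ ≤ i.val ∧ c i = true)).card = w₂) ∧
    ∀ c ∈ C, ∀ c' ∈ C, c ≠ c' → d ≤ hammingDist c c'}

section Aux
open Finset
variable {n n₁ n₂ : ℕ}

lemma wt_comp (c : Fin n → Bool) (σ : Equiv.Perm (Fin n)) :
    wt (fun i => c (σ i)) = wt c := by
  unfold wt
  apply Finset.card_bij (fun i _ => σ i)
  · intro a ha; simp_all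
  · intro a ha b hb h; exact σ.injective h
  · intro b hb; exact ⟨σ.symm b, by simp_all, by simp⟩

lemma hd_comp (c c' : Fin n → Bool) (σ : Equiv.Perm (Fin n)) :
    hammingDist (fun i => c (σ i)) (fun i => c' (σ i)) = hammingDist c c' := by
  unfold hammingDist
  apply Finset.card_bij (fun i _ => σ i)
  · intro a ha; simp_all
  · intro a ha b hb h; exact σ.injective h
  · intro b hb; exact ⟨σ.symm b, by simp_all, by simp⟩

lemma comp_inj (σ : Equiv.Perm (Fin n)) :
    Function.Injective (fun (c : Fin n → Bool) => (fun i => c (σ i))) := by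
  intro a b h
  funext i
  have := congrFun h (σ.symm i)
  simpa using this

lemma wt_eq_card_subtype (c : Fin n → Bool) :
    wt c = Fintype.card {i // c i = true} := by
  rw [Fintype.card_subtype]; rfl

lemma exists_perm_comp (c c' : Fin n → Bool) (h : wt c = wt c') :
    ∃ τ : Equiv.Perm (Fin n), ∀ i, c (τ i) = c' i := by
  have h1 : Fintype.card {i // c' i = true} = Fintype.card {i // c i = true} := by
    rw [← wt_eq_card_subtype, ← wt_eq_card_subtype, h]
  have h2 : Fintype.card {i // ¬ c' i = true} = Fintype.card {i // ¬ c i = true} := by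
    have a1 := Fintype.card_subtype_compl (fun i : Fin n => c i = true)
    have a2 := Fintype.card_subtype_compl (fun i : Fin n => c' i = true)
    rw [a1, a2, h1]
  let e₁ : {i // c' i = true} ≃ {i // c i = true} := Fintype.equivOfCardEq h1
  let e₂ : {i // ¬ c' i = true} ≃ {i // ¬ c i = true} := Fintype.equivOfCardEq h2
  refine ⟨(Equiv.sumCompl (fun i => c' i = true)).symm.trans
    ((Equiv.sumCongr e₁ e₂).trans (Equiv.sumCompl (fun i => c i = true))), ?_⟩
  intro i
  by_cases hi : c' i = true
  · have : (Equiv.sumCompl (fun i => c' i = true)).symm i = Sum.inl ⟨i, hi⟩ := by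
      exact Equiv.sumCompl_symm_apply_of_pos (p := fun i => c' i = true) hi
    simp only [Equiv.trans_apply, this, Equiv.sumCongr_apply, Sum.map_inl,
      Equiv.sumCompl_apply_inl]
    rw [hi]; exact (e₁ ⟨i, hi⟩).2
  · have : (Equiv.sumCompl (fun i => c' i = true)).symm i = Sum.inr ⟨i, hi⟩ := by
      exact Equiv.sumCompl_symm_apply_of_neg (p := fun i => c' i = true) hi
    simp only [Equiv.trans_apply, this, Equiv.sumCongr_apply, Sum.map_inr,
      Equiv.sumCompl_apply_inr]
    have := (e₂ ⟨i, hi⟩).2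
    simp only [Bool.not_eq_true] at this hi
    rw [this, hi]

/-- fiber constancy: #{σ : c∘σ = c'} = #{σ : c∘σ = c''} when wt c' = wt c'' -/
lemma fiber_card_eq (c c' c'' : Fin n → Bool) (h : wt c' = wt c'') :
    (univ.filter fun σ : Equiv.Perm (Fin n) => (fun i => c (σ i)) = c').card =
    (univ.filter fun σ : Equiv.Perm (Fin n) => (fun i => c (σ i)) = c'').card := by
  obtain ⟨τ, hτ⟩ := exists_perm_comp c' c'' h
  apply Finset.card_bij' (fun σ _ => τ.trans σ) (fun σ _ => τ.symm.trans σ)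
  · intro σ hσ
    simp only [mem_filter, mem_univ, true_and] at hσ ⊢
    funext i
    have := congrFun hσ (τ i)
    simpa using this.trans (hτ i)
  · intro σ hσ
    simp only [mem_filter, mem_univ, true_and] at hσ ⊢
    funext i
    have h1 := congrFun hσ (τ.symm i)
    simp only [Equiv.trans_apply] at h1 ⊢
    have h2 := hτ (τ.symm i)
    simp only [Equiv.apply_symm_apply] at h2
    rw [h1, ← h2]
  · intro σ _; ext i; simp
  · intro σ _; ext i; simp

lemma card_weight_words (n w : ℕ) :
    ((univ : Finset (Fin n → Bool)).filter fun c => wt c = w).card = n.choose w := by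
  have : (Finset.powersetCard w (univ : Finset (Fin n))).card = n.choose w := by
    rw [Finset.card_powersetCard]; simp
  rw [← this]
  · apply Finset.card_bij' (fun c _ => univ.filter fun i => c i = true)
      (fun s _ => fun i => decide (i ∈ s))
    · intro c _; funext i; simp
    · intro s _; ext i; simp
    · intro c hc
      simp only [mem_filter, mem_univ, true_and] at hc
      simp only [Finset.mem_powersetCard]
      exact ⟨subset_univ _, hc⟩
    · intro s hs
      simp only [Finset.mem_powersetCard] at hs
      simp only [mem_filter, mem_univ, true_and]
      rw [← hs.2]; unfold wt; congr 1; ext i; simp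

lemma wt_split (c : Fin (n₁ + n₂) → Bool) :
    (univ.filter (fun i : Fin (n₁ + n₂) => i.val < n₁ ∧ c i = true)).card +
    (univ.filter (fun i : Fin (n₁ + n₂) => n₁ ≤ i.val ∧ c i = true)).card = wt c := by
  unfold wt
  rw [← Finset.card_filter_add_card_filter_not (p := fun i : Fin (n₁ + n₂) => i.val < n₁)
    (s := univ.filter (fun i => c i = true))]
  congr 1
  · rw [Finset.filter_filter]; congr 1; ext i; simp [and_comm]
  · rw [Finset.filter_filter]; congr 1; ext i
    simp [not_lt, and_comm]

lemma card_first_part : ((univ : Finset (Fin (n₁ + n₂))).filter fun i => i.val < n₁).card = n₁ := by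
  have : ((univ : Finset (Fin (n₁ + n₂))).filter fun i => i.val < n₁).card
      = (univ : Finset (Fin n₁)).card := by
    apply Finset.card_bij (fun (j : Fin (n₁ + n₂)) _ => (⟨j.val, by
      simp_all [Finset.mem_filter]⟩ : Fin n₁))
    · intros; simp
    · intro a ha b hb h
      simp only [Fin.mk.injEq] at h
      exact Fin.val_injective h
    · intro b _
      refine ⟨Fin.castAdd n₂ b, ?_, ?_⟩
      · simp [Finset.mem_filter]
      · simp
  simp [this]

lemma card_second_part : ((univ : Finset (Fin (n₁ + n₂))).filter fun i => n₁ ≤ i.val).card = n₂ := by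
  have h := Finset.card_filter_add_card_filter_not (p := fun i : Fin (n₁ + n₂) => i.val < n₁)
    (s := (univ : Finset (Fin (n₁ + n₂))))
  have h2 : ((univ : Finset (Fin (n₁ + n₂))).filter fun i => ¬ i.val < n₁)
      = (univ.filter fun i => n₁ ≤ i.val) := by
    congr 1; ext i; simp [not_lt]
  rw [h2, card_first_part, Finset.card_univ, Fintype.card_fin] at h
  omega

lemma card_doubly_words (w₁ w₂ : ℕ) :
    ((univ : Finset (Fin (n₁ + n₂) → Bool)).filter fun c =>
      (univ.filter (fun i : Fin (n₁ + n₂) => i.val < n₁ ∧ c i = true)).card = w₁ ∧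
      (univ.filter (fun i : Fin (n₁ + n₂) => n₁ ≤ i.val ∧ c i = true)).card = w₂).card
    = n₁.choose w₁ * n₂.choose w₂ := by
  set F := (univ : Finset (Fin (n₁ + n₂))).filter (fun i => i.val < n₁) with hF
  set G := (univ : Finset (Fin (n₁ + n₂))).filter (fun i => n₁ ≤ i.val) with hG
  have key : ((univ : Finset (Fin (n₁ + n₂) → Bool)).filter fun c =>
      (univ.filter (fun i : Fin (n₁ + n₂) => i.val < n₁ ∧ c i = true)).card = w₁ ∧
      (univ.filter (fun i : Fin (n₁ + n₂) => n₁ ≤ i.val ∧ c i = true)).card = w₂).card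
      = ((Finset.powersetCard w₁ F) ×ˢ (Finset.powersetCard w₂ G)).card := by
    apply Finset.card_bij' (fun c _ => (univ.filter (fun i => i.val < n₁ ∧ c i = true),
        univ.filter (fun i => n₁ ≤ i.val ∧ c i = true)))
      (fun p _ => fun i => decide (i ∈ p.1 ∨ i ∈ p.2))
    -- left_inv
    · intro c _
      funext i
      by_cases h1 : i.val < n₁ <;> by_cases h2 : c i = true <;>
        simp_all [not_lt] <;> omega
    -- right_inv
    · intro p hp
      simp only [Finset.mem_product, Finset.mem_powersetCard] at hp
      obtain ⟨⟨hA, _⟩, ⟨hB, _⟩⟩ := hp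
      have hAF : ∀ i ∈ p.1, i.val < n₁ := fun i hi => by
        have := hA hi; rw [hF] at this; simpa using this
      have hBG : ∀ i ∈ p.2, n₁ ≤ i.val := fun i hi => by
        have := hB hi; rw [hG] at this; simpa using this
      have e1 : univ.filter (fun i : Fin (n₁+n₂) => i.val < n₁ ∧ decide (i ∈ p.1 ∨ i ∈ p.2) = true) = p.1 := by
        ext i
        simp only [Finset.mem_filter, mem_univ, true_and, decide_eq_true_eq]
        constructor
        · rintro ⟨hlt, (h | h)⟩
          · exact h
          · exact absurd (hBG i h) (by omega)
        · intro h; exact ⟨hAF i h, Or.inl h⟩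
      have e2 : univ.filter (fun i : Fin (n₁+n₂) => n₁ ≤ i.val ∧ decide (i ∈ p.1 ∨ i ∈ p.2) = true) = p.2 := by
        ext i
        simp only [Finset.mem_filter, mem_univ, true_and, decide_eq_true_eq]
        constructor
        · rintro ⟨hle, (h | h)⟩
          · exact absurd (hAF i h) (by omega)
          · exact h
        · intro h; exact ⟨hBG i h, Or.inr h⟩
      simp only [e1, e2]
    -- hi
    · intro c hc
      simp only [Finset.mem_filter, mem_univ, true_and] at hc
      simp only [Finset.mem_product, Finset.mem_powersetCard]
      refine ⟨⟨?_, hc.1⟩, ?_, hc.2⟩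
      · intro i hi; simp only [Finset.mem_filter, mem_univ, true_and] at hi ⊢
        rw [hF]; simp [hi.1]
      · intro i hi; simp only [Finset.mem_filter, mem_univ, true_and] at hi ⊢
        rw [hG]; simp [hi.1]
    -- hj
    · intro p hp
      simp only [Finset.mem_product, Finset.mem_powersetCard] at hp
      obtain ⟨⟨hA, hcA⟩, ⟨hB, hcB⟩⟩ := hp
      have hAF : ∀ i ∈ p.1, i.val < n₁ := fun i hi => by
        have := hA hi; rw [hF] at this; simpa using this
      have hBG : ∀ i ∈ p.2, n₁ ≤ i.val := fun i hi => by
        have := hB hi; rw [hG] at this; simpa using this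
      simp only [Finset.mem_filter, mem_univ, true_and, decide_eq_true_eq]
      constructor
      · rw [← hcA]; congr 1; ext i
        simp only [Finset.mem_filter, mem_univ, true_and, decide_eq_true_eq]
        constructor
        · rintro ⟨hlt, (h | h)⟩
          · exact h
          · exact absurd (hBG i h) (by omega)
        · intro h; exact ⟨hAF i h, Or.inl h⟩
      · rw [← hcB]; congr 1; ext i
        simp only [Finset.mem_filter, mem_univ, true_and, decide_eq_true_eq]
        constructor
        · rintro ⟨hle, (h | h)⟩
          · exact absurd (hAF i h) (by omega)
          · exact h
        · intro h; exact ⟨hBG i h, Or.inr h⟩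
  rw [key, Finset.card_product, Finset.card_powersetCard, Finset.card_powersetCard,
    card_first_part, card_second_part]

end Aux

open Finset in
/-- `A(n₁+n₂,d,w₁+w₂) · C(n₁,w₁) · C(n₂,w₂) ≤ C(n₁+n₂,w₁+w₂) · T(w₁,n₁,w₂,n₂,d)`. -/
theorem doubly_constant_weight_bound (n₁ n₂ w₁ w₂ d : ℕ) (hn₁ : 1 ≤ n₁) (hn₂ : 1 ≤ n₂)
    (hw₁ : w₁ ≤ n₁) (hw₂ : w₂ ≤ n₂) (hd : 1 ≤ d) :
    Acw (n₁ + n₂) d (w₁ + w₂) * n₁.choose w₁ * n₂.choose w₂ ≤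
      (n₁ + n₂).choose (w₁ + w₂) * T w₁ n₁ w₂ n₂ d := by
  set n := n₁ + n₂ with hn
  set w := w₁ + w₂ with hw
  -- the set defining Acw
  set SA : Set ℕ := {m | ∃ C : Finset (Fin n → Bool), C.card = m ∧ (∀ c ∈ C, wt c = w) ∧
    ∀ c ∈ C, ∀ c' ∈ C, c ≠ c' → d ≤ hammingDist c c'} with hSA
  have hSAne : SA.Nonempty := ⟨0, ∅, by simp⟩
  have hSAbdd : BddAbove SA := by
    refine ⟨Fintype.card (Fin n → Bool), ?_⟩
    rintro m ⟨C, rfl, -, -⟩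
    exact Finset.card_le_univ C
  have hM : Acw n d w ∈ SA := Nat.sSup_mem hSAne hSAbdd
  obtain ⟨C, hCcard, hCwt, hCdist⟩ := hM
  set M := Acw n d w with hMdef
  -- the predicate for doubly-constant-weight
  set P : (Fin n → Bool) → Prop := fun c =>
    (univ.filter (fun i : Fin n => i.val < n₁ ∧ c i = true)).card = w₁ ∧
    (univ.filter (fun i : Fin n => n₁ ≤ i.val ∧ c i = true)).card = w₂ with hP
  -- bounded above T set
  have hTbdd : BddAbove {m | ∃ C : Finset (Fin (n₁ + n₂) → Bool), C.card = m ∧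
      (∀ c ∈ C, (Finset.univ.filter (fun i : Fin (n₁ + n₂) => i.val < n₁ ∧ c i = true)).card = w₁ ∧
        (Finset.univ.filter (fun i : Fin (n₁ + n₂) => n₁ ≤ i.val ∧ c i = true)).card = w₂) ∧
      ∀ c ∈ C, ∀ c' ∈ C, c ≠ c' → d ≤ hammingDist c c'} := by
    refine ⟨Fintype.card (Fin (n₁ + n₂) → Bool), ?_⟩
    rintro m ⟨C, rfl, -, -⟩
    exact Finset.card_le_univ C
  -- each permuted-filtered code is a T-code
  have hT : ∀ σ : Equiv.Perm (Fin n),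
      ((C.image (fun c => fun i => c (σ i))).filter P).card ≤ T w₁ n₁ w₂ n₂ d := by
    intro σ
    apply le_csSup hTbdd
    refine ⟨(C.image (fun c => fun i => c (σ i))).filter P, rfl, ?_, ?_⟩
    · intro c hc
      exact (Finset.mem_filter.mp hc).2
    · intro a ha b hb hab
      obtain ⟨a', ha', rfl⟩ := Finset.mem_image.mp (Finset.mem_filter.mp ha).1
      obtain ⟨b', hb', rfl⟩ := Finset.mem_image.mp (Finset.mem_filter.mp hb).1
      have hne : a' ≠ b' := by rintro rfl; exact hab rfl
      calc d ≤ hammingDist a' b' := hCdist a' ha' b' hb' hne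
        _ = _ := (hd_comp a' b' σ).symm
  -- rewrite each term as a filter of C
  have himg : ∀ σ : Equiv.Perm (Fin n),
      ((C.image (fun c => fun i => c (σ i))).filter P).card
      = (C.filter (fun c => P (fun i => c (σ i)))).card := by
    intro σ
    rw [Finset.filter_image]
    apply Finset.card_image_of_injective
    intro a b h
    funext i
    have := congrFun h (σ.symm i)
    simpa using this
  set W := (univ : Finset (Fin n → Bool)).filter (fun c => wt c = w) with hWdef
  set D := (univ : Finset (Fin n → Bool)).filter P with hDdef
  -- per-codeword counting: #{σ : P(c∘σ)} = |D| * K_c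
  have hcount : ∀ c ∈ C,
      (univ.filter (fun σ : Equiv.Perm (Fin n) => P (fun i => c (σ i)))).card
        = D.card * (univ.filter fun σ : Equiv.Perm (Fin n) => (fun i => c (σ i)) = c).card := by
    intro c hc
    have hs : ∀ σ ∈ (univ.filter (fun σ : Equiv.Perm (Fin n) => P (fun i => c (σ i)))),
        (fun i => c (σ i)) ∈ D := by
      intro σ hσ
      simp only [hDdef, mem_filter, mem_univ, true_and] at hσ ⊢
      exact hσ
    rw [Finset.card_eq_sum_card_fiberwise hs]
    have heach : ∀ c' ∈ D, ((univ.filter (fun σ : Equiv.Perm (Fin n) => P (fun i => c (σ i)))).filter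
        (fun σ => (fun i => c (σ i)) = c')).card
        = (univ.filter fun σ : Equiv.Perm (Fin n) => (fun i => c (σ i)) = c).card := by
      intro c' hc'
      have hPc' : P c' := (mem_filter.mp hc').2
      have h1 : (univ.filter (fun σ : Equiv.Perm (Fin n) => P (fun i => c (σ i)))).filter
          (fun σ => (fun i => c (σ i)) = c')
          = univ.filter (fun σ : Equiv.Perm (Fin n) => (fun i => c (σ i)) = c') := by
        ext σ
        simp only [mem_filter, mem_univ, true_and]
        constructor
        · rintro ⟨-, h⟩; exact h
        · intro h; exact ⟨by rw [h]; exact hPc', h⟩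
      rw [h1]
      apply fiber_card_eq
      have hwc' : wt c' = w := by
        rw [← wt_split c', hPc'.1, hPc'.2]
      rw [hwc', hCwt c hc]
    rw [Finset.sum_congr rfl heach, Finset.sum_const, smul_eq_mul]
  -- total count: n! = |W| * K_c
  have hfull : ∀ c ∈ C,
      (univ : Finset (Equiv.Perm (Fin n))).card
        = W.card * (univ.filter fun σ : Equiv.Perm (Fin n) => (fun i => c (σ i)) = c).card := by
    intro c hc
    have hs : ∀ σ ∈ (univ : Finset (Equiv.Perm (Fin n))), (fun i => c (σ i)) ∈ W := by
      intro σ _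
      simp only [hWdef, mem_filter, mem_univ, true_and]
      rw [wt_comp]; exact hCwt c hc
    rw [Finset.card_eq_sum_card_fiberwise hs]
    have heach : ∀ c' ∈ W,
        ((univ : Finset (Equiv.Perm (Fin n))).filter (fun σ => (fun i => c (σ i)) = c')).card
        = (univ.filter fun σ : Equiv.Perm (Fin n) => (fun i => c (σ i)) = c).card := by
      intro c' hc'
      apply fiber_card_eq
      have hwc' : wt c' = w := (mem_filter.mp hc').2
      rw [hwc', hCwt c hc]
    rw [Finset.sum_congr rfl heach, Finset.sum_const, smul_eq_mul]
  -- handle empty code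
  rcases C.eq_empty_or_nonempty with hCe | ⟨c₀, hc₀⟩
  · rw [← hCcard, hCe]
    simp
  -- K is constant
  set K := (univ.filter fun σ : Equiv.Perm (Fin n) => (fun i => c₀ (σ i)) = c₀).card with hKdef
  have hWcard : W.card = n.choose w := by rw [hWdef]; exact card_weight_words n w
  have hWpos : 0 < W.card := by
    rw [hWcard]
    exact Nat.choose_pos (by omega)
  have hKconst : ∀ c ∈ C,
      (univ.filter fun σ : Equiv.Perm (Fin n) => (fun i => c (σ i)) = c).card = K := by
    intro c hc
    have h1 := hfull c hc
    have h2 := hfull c₀ hc₀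
    rw [← hKdef] at h2
    exact (Nat.eq_of_mul_eq_mul_left hWpos (h1.symm.trans h2)).symm ▸ rfl
  have hDcard : D.card = n₁.choose w₁ * n₂.choose w₂ := card_doubly_words w₁ w₂
  have hsum : ∑ σ : Equiv.Perm (Fin n), (C.filter (fun c => P (fun i => c (σ i)))).card
      = ∑ c ∈ C, (univ.filter (fun σ : Equiv.Perm (Fin n) => P (fun i => c (σ i)))).card := by
    simp_rw [Finset.card_filter]
    exact Finset.sum_comm
  have hle : M * (D.card * K) ≤ (univ : Finset (Equiv.Perm (Fin n))).card * T w₁ n₁ w₂ n₂ d := by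
    have e1 : ∑ c ∈ C, (univ.filter (fun σ : Equiv.Perm (Fin n) => P (fun i => c (σ i)))).card
        = M * (D.card * K) := by
      rw [Finset.sum_congr rfl (fun c hc => by rw [hcount c hc, hKconst c hc]),
        Finset.sum_const, smul_eq_mul, hCcard]
    rw [← e1, ← hsum]
    calc ∑ σ : Equiv.Perm (Fin n), (C.filter (fun c => P (fun i => c (σ i)))).card
        = ∑ σ : Equiv.Perm (Fin n), ((C.image (fun c => fun i => c (σ i))).filter P).card :=
          Finset.sum_congr rfl (fun σ _ => (himg σ).symm)
      _ ≤ ∑ _σ : Equiv.Perm (Fin n), T w₁ n₁ w₂ n₂ d := Finset.sum_le_sum (fun σ _ => hT σ)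
      _ = _ := by rw [Finset.sum_const, smul_eq_mul]
  have hperm := hfull c₀ hc₀
  rw [← hKdef] at hperm
  rw [hperm] at hle
  have hKpos : 0 < K := by
    rcases Nat.eq_zero_or_pos K with h | h
    · exfalso
      have hpos : 0 < (univ : Finset (Equiv.Perm (Fin n))).card :=
        Finset.card_pos.mpr Finset.univ_nonempty
      rw [hperm, h, mul_zero] at hpos
      exact lt_irrefl 0 hpos
    · exact h
  have final : M * D.card ≤ W.card * T w₁ n₁ w₂ n₂ d := by
    apply Nat.le_of_mul_le_mul_right _ hKpos
    calc M * D.card * K = M * (D.card * K) := by ring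
      _ ≤ W.card * K * T w₁ n₁ w₂ n₂ d := hle
      _ = W.card * T w₁ n₁ w₂ n₂ d * K := by ring
  calc M * n₁.choose w₁ * n₂.choose w₂ = M * D.card := by rw [hDcard, mul_assoc]
    _ ≤ W.card * T w₁ n₁ w₂ n₂ d := final
    _ = n.choose w * T w₁ n₁ w₂ n₂ d := by rw [hWcard]
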